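/- Let G(t) be an invariant Ricci flow on the three-dimensional Heisenberg Lie algebra, i.e. dG/dt = −2Ric_G. Then R_G satisfies the ODE dR_G/dt = 6R_G², and consequently d/dt (t R_G) = 6 t R_G (R_G + 1/(6t)) ≤ 0, since R_G ≤ 0 and (using the explicit solution R_G(t) = −1/(6(t+C)) with C ≥ 0 when R_G(t₀) < 0 for some t₀) R_G + 1/(6t) ≥ 0. -/

import Mathlib

open Matrix

namespace RFN

variable {n : ℕ}

/-- Bracket determined by structure constants: `[e i, e j] = ∑ k, c i j k • e k`. -/
def bra (c : Fin n → Fin n → Fin n → ℝ) (x y : Fin n → ℝ) : Fin n → ℝ :=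
  fun k => ∑ i, ∑ j, x i * y j * c i j k

/-- `c` is a family of structure constants of a Lie algebra. -/
def IsLieSC (c : Fin n → Fin n → Fin n → ℝ) : Prop :=
  (∀ i j k, c i j k = - c j i k) ∧
  ∀ x y z, bra c (bra c x y) z + bra c (bra c y z) x + bra c (bra c z x) y = 0

def adIter (c : Fin n → Fin n → Fin n → ℝ) (v : ℕ → Fin n → ℝ) :
    ℕ → (Fin n → ℝ) → (Fin n → ℝ)
  | 0, x => x
  | m + 1, x => bra c (v m) (adIter c v m x)

/-- Nilpotency of the Lie algebra with structure constants `c`. -/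
def IsNilpotentSC (c : Fin n → Fin n → Fin n → ℝ) : Prop :=
  ∃ N : ℕ, ∀ v x, adIter c v N x = 0

/-- Inner product of vectors with respect to the metric matrix `G`. -/
def gdot (G : Matrix (Fin n) (Fin n) ℝ) (x y : Fin n → ℝ) : ℝ :=
  ∑ i, ∑ j, x i * G i j * y j

/-- Components of the Ricci bilinear form of the invariant metric `G`:
`Ric_G(x,y) = -(1/2) Σ G([x,e_i],[y,e_j])G^{ij} + (1/4) Σ G^{ip}G^{jq}G([e_i,e_j],x)G([e_p,e_q],y)`. -/
noncomputable def Ricm (c : Fin n → Fin n → Fin n → ℝ) (G : Matrix (Fin n) (Fin n) ℝ) :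
    Matrix (Fin n) (Fin n) ℝ :=
  Matrix.of fun a b =>
    -(1/2) * (∑ i, ∑ j, G⁻¹ i j * gdot G (c a i) (c b j))
    + (1/4) * (∑ i, ∑ j, ∑ p, ∑ q, G⁻¹ i p * G⁻¹ j q *
        (∑ k, c i j k * G k a) * (∑ l, c p q l * G l b))

/-- Scalar curvature `R_G = -(1/4)|[·,·]|²_G`. -/
noncomputable def scalR (c : Fin n → Fin n → Fin n → ℝ) (G : Matrix (Fin n) (Fin n) ℝ) : ℝ :=
  -(1/4) * (∑ i, ∑ j, ∑ p, ∑ q, G⁻¹ i p * G⁻¹ j q * gdot G (c i j) (c p q))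

/-- Ricci endomorphism `Rc_G = G⁻¹ Ric_G`. -/
noncomputable def Rc (c : Fin n → Fin n → Fin n → ℝ) (G : Matrix (Fin n) (Fin n) ℝ) :
    Matrix (Fin n) (Fin n) ℝ := G⁻¹ * Ricm c G

/-- `δ(A)(e_i,e_j) = A[e_i,e_j] - [A e_i, e_j] - [e_i, A e_j]` (components). -/
def deltaE (c : Fin n → Fin n → Fin n → ℝ) (A : Matrix (Fin n) (Fin n) ℝ) :
    Fin n → Fin n → Fin n → ℝ :=
  fun i j k => (∑ l, A k l * c i j l) - (∑ l, A l i * c l j k) - (∑ l, A l j * c i l k)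

/-- The inner product on `Λ²𝔤*⊗𝔤` induced by `G` (full sum over ordered pairs). -/
noncomputable def tinner (G : Matrix (Fin n) (Fin n) ℝ) (μ ν : Fin n → Fin n → Fin n → ℝ) : ℝ :=
  ∑ i, ∑ j, ∑ p, ∑ q, G⁻¹ i p * G⁻¹ j q * gdot G (μ i j) (ν p q)

/-- The (Hilbert–Schmidt) inner product of endomorphisms induced by `G`. -/
noncomputable def einner (G : Matrix (Fin n) (Fin n) ℝ) (A B : Matrix (Fin n) (Fin n) ℝ) : ℝ :=
  ∑ i, ∑ j, G⁻¹ i j * gdot G (fun k => A k i) (fun k => B k j)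

/-- The inner product of bilinear forms induced by `G`. -/
noncomputable def binner (G : Matrix (Fin n) (Fin n) ℝ) (S T : Matrix (Fin n) (Fin n) ℝ) : ℝ :=
  ∑ i, ∑ j, ∑ p, ∑ q, G⁻¹ i p * G⁻¹ j q * S i j * T p q

/-- `|Ric_G|²`. -/
noncomputable def ric2 (c : Fin n → Fin n → Fin n → ℝ) (G : Matrix (Fin n) (Fin n) ℝ) : ℝ :=
  binner G (Ricm c G) (Ricm c G)

/-- The functional `W₊(G,τ) = τ R_G + τ² |Ric_G|²`. -/
noncomputable def Wplus (c : Fin n → Fin n → Fin n → ℝ) (G : Matrix (Fin n) (Fin n) ℝ) (τ : ℝ) : ℝ :=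
  τ * scalR c G + τ ^ 2 * ric2 c G

/-- Structure constants of the 3-dimensional Heisenberg Lie algebra: `[e₀,e₁] = e₂`, `e₂` central. -/
def heis : Fin 3 → Fin 3 → Fin 3 → ℝ := fun i j k =>
  if i = 0 ∧ j = 1 ∧ k = 2 then 1 else if i = 1 ∧ j = 0 ∧ k = 2 then -1 else 0

end RFN

open RFN Matrix

lemma heis_eq : heis = fun i j k => !![(0:ℝ),1,0;-1,0,0;0,0,0] i j * (if k = (2:Fin 3) then 1 else 0) := by
  funext i j k
  fin_cases i <;> fin_cases j <;> fin_cases k <;> simp [heis, vecHead, vecTail]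

lemma inv3 (M : Matrix (Fin 3) (Fin 3) ℝ) (i j : Fin 3) :
    M⁻¹ i j = M.det⁻¹ * adjugate M i j := by
  rw [Matrix.inv_def, Ring.inverse_eq_inv']; rfl

lemma gdot_heis (M : Matrix (Fin 3) (Fin 3) ℝ) (i j p q : Fin 3) :
    gdot M (heis i j) (heis p q) =
      !![(0:ℝ),1,0;-1,0,0;0,0,0] i j * !![(0:ℝ),1,0;-1,0,0;0,0,0] p q * M 2 2 := by
  simp [gdot, heis_eq, Fin.sum_univ_three]
  ring

lemma scalR_eq (M : Matrix (Fin 3) (Fin 3) ℝ) (hd : M.det ≠ 0) :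
    scalR heis M = -(M 2 2)^2 / (2 * M.det) := by
  simp only [scalR, gdot_heis, Fin.sum_univ_three, inv3, adjugate_fin_three,
    Matrix.cons_val', Matrix.cons_val_zero, Matrix.cons_val_one, Matrix.head_cons,
    Matrix.empty_val', Matrix.cons_val_fin_one, Matrix.head_fin_const,
    Matrix.cons_val_two, Matrix.tail_cons, Matrix.of_apply,
    mul_zero, zero_mul, mul_one, one_mul, add_zero, zero_add, neg_mul, mul_neg, neg_neg]
  have h22 : (M 1 1 * M 2 2 - M 1 2 * M 2 1) * (M 0 0 * M 2 2 - M 0 2 * M 2 0)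
      - (-(M 0 1 * M 2 2) + M 0 2 * M 2 1) * (-(M 1 0 * M 2 2) + M 1 2 * M 2 0)
      = M 2 2 * M.det := by rw [det_fin_three]; ring
  field_simp
  linear_combination (-4 : ℝ) * M 2 2 * h22


lemma bsum (M : Matrix (Fin 3) (Fin 3) ℝ) (i j : Fin 3) (a : Fin 3) :
    (∑ k, heis i j k * M k a) = !![(0:ℝ),1,0;-1,0,0;0,0,0] i j * M 2 a := by
  simp [heis_eq, Fin.sum_univ_three]

lemma S2' (M : Matrix (Fin 3) (Fin 3) ℝ) (x y : ℝ) (hd : M.det ≠ 0) :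
    (∑ i, ∑ j, ∑ p, ∑ q, M⁻¹ i p * M⁻¹ j q *
      (!![(0:ℝ),1,0;-1,0,0;0,0,0] i j * x) * (!![(0:ℝ),1,0;-1,0,0;0,0,0] p q * y))
      = 2 * M 2 2 * x * y / M.det := by
  have h22 : (M 1 1 * M 2 2 - M 1 2 * M 2 1) * (M 0 0 * M 2 2 - M 0 2 * M 2 0)
      - (-(M 0 1 * M 2 2) + M 0 2 * M 2 1) * (-(M 1 0 * M 2 2) + M 1 2 * M 2 0)
      = M 2 2 * M.det := by rw [det_fin_three]; ring
  simp only [Fin.sum_univ_three, inv3, adjugate_fin_three,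
    Matrix.cons_val', Matrix.cons_val_zero, Matrix.cons_val_one, Matrix.head_cons,
    Matrix.empty_val', Matrix.cons_val_fin_one, Matrix.head_fin_const,
    Matrix.cons_val_two, Matrix.tail_cons, Matrix.of_apply,
    mul_zero, zero_mul, mul_one, one_mul, add_zero, zero_add, neg_mul, mul_neg, neg_neg]
  field_simp
  linear_combination (2 * x * y) * h22

set_option maxHeartbeats 1000000 in
lemma Ricm_eq (M : Matrix (Fin 3) (Fin 3) ℝ) (hd : M.det ≠ 0) :
    Ricm heis M = (M.det⁻¹ * (M 2 2 / 2)) •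
      !![M 2 0 * M 2 0 + M 0 2 * M 2 0 - M 0 0 * M 2 2,
         M 2 0 * M 2 1 + M 1 2 * M 2 0 - M 1 0 * M 2 2,
         M 2 0 * M 2 2;
         M 2 1 * M 2 0 + M 0 2 * M 2 1 - M 0 1 * M 2 2,
         M 2 1 * M 2 1 + M 1 2 * M 2 1 - M 1 1 * M 2 2,
         M 2 1 * M 2 2;
         M 2 2 * M 2 0, M 2 2 * M 2 1, M 2 2 * M 2 2] := by
  ext a b
  rw [Ricm, Matrix.of_apply]
  simp only [gdot_heis, bsum]
  rw [S2' M _ _ hd]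
  fin_cases a <;> fin_cases b <;>
  · simp only [Fin.sum_univ_three, inv3, adjugate_fin_three,
      Matrix.smul_apply, smul_eq_mul,
      Matrix.cons_val', Matrix.cons_val_zero, Matrix.cons_val_one, Matrix.head_cons,
      Matrix.empty_val', Matrix.cons_val_fin_one, Matrix.head_fin_const,
      Matrix.cons_val_two, Matrix.tail_cons, Matrix.of_apply,
      Fin.reduceFinMk,
      mul_zero, zero_mul, mul_one, one_mul, add_zero, zero_add, neg_mul, mul_neg, neg_neg]
    field_simp
    ring

set_option maxHeartbeats 2000000 in
lemma hasDeriv_scalR (G : ℝ → Matrix (Fin 3) (Fin 3) ℝ)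
    (hpd : ∀ t, 0 < t → (G t).PosDef)
    (hflow : ∀ t, 0 < t → ∀ i j : Fin 3,
      HasDerivAt (fun u => G u i j) (-2 * Ricm heis (G t) i j) t)
    (s : ℝ) (hs : 0 < s) :
    HasDerivAt (fun u => scalR heis (G u)) (6 * (scalR heis (G s))^2) s := by
  have hps := hpd s hs
  have hdet : (G s).det ≠ 0 := ne_of_gt hps.det_pos
  have h10 : G s 1 0 = G s 0 1 := by
    have := hps.isHermitian.apply 0 1; simpa using this
  have h20 : G s 2 0 = G s 0 2 := by
    have := hps.isHermitian.apply 0 2; simpa using this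
  have h21 : G s 2 1 = G s 1 2 := by
    have := hps.isHermitian.apply 1 2; simpa using this
  have hD : (G s).det = _ := det_fin_three (G s)
  have hRic := Ricm_eq (G s) hdet
  have he : ∀ i j : Fin 3, HasDerivAt (fun u => G u i j) (-2 * Ricm heis (G s) i j) s :=
    hflow s hs
  have hDet' := ((((((he 0 0).mul (he 1 1)).mul (he 2 2)).sub
      (((he 0 0).mul (he 1 2)).mul (he 2 1))).sub
      (((he 0 1).mul (he 1 0)).mul (he 2 2))).add
      (((he 0 1).mul (he 1 2)).mul (he 2 0))).add
      (((he 0 2).mul (he 1 0)).mul (he 2 1)) |>.sub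
      (((he 0 2).mul (he 1 1)).mul (he 2 0))
  have hDet : HasDerivAt (fun u => (G u).det) ((G s 2 2)^2) s := by
    have h1 := hDet'.congr_of_eventuallyEq
      (Filter.Eventually.of_forall fun u => det_fin_three (G u))
    refine h1.congr_deriv ?_
    symm
    rw [hRic]
    simp only [Matrix.smul_apply, smul_eq_mul,
      Matrix.cons_val', Matrix.cons_val_zero, Matrix.cons_val_one, Matrix.head_cons,
      Matrix.empty_val', Matrix.cons_val_fin_one, Matrix.head_fin_const,
      Matrix.cons_val_two, Matrix.tail_cons, Matrix.of_apply, Pi.mul_apply]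
    field_simp
    rw [hD, h10, h20, h21]
    ring
  have hNum : HasDerivAt (fun u => -(G u 2 2)^2) (2 * (G s 2 2)^4 / (G s).det) s := by
    have h1 := ((he 2 2).pow 2).neg
    refine h1.congr_deriv ?_
    symm
    rw [hRic]
    simp only [Matrix.smul_apply, smul_eq_mul,
      Matrix.cons_val', Matrix.cons_val_zero, Matrix.cons_val_one, Matrix.head_cons,
      Matrix.empty_val', Matrix.cons_val_fin_one, Matrix.head_fin_const,
      Matrix.cons_val_two, Matrix.tail_cons, Matrix.of_apply]
    field_simp
    ring
  have hQ := hNum.div (hDet.const_mul 2) (mul_ne_zero two_ne_zero hdet)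
  have heq : (fun u => scalR heis (G u)) =ᶠ[nhds s]
      fun u => -(G u 2 2)^2 / (2*(G u).det) := by
    filter_upwards [Ioi_mem_nhds hs] with u hu
    exact scalR_eq _ (ne_of_gt (hpd u hu).det_pos)
  have hfin := hQ.congr_of_eventuallyEq heq
  refine hfin.congr_deriv ?_
  symm
  rw [scalR_eq _ hdet]
  field_simp
  ring

lemma diag22_pos (M : Matrix (Fin 3) (Fin 3) ℝ) (h : M.PosDef) : 0 < M 2 2 := by
  exact h.diag_pos

lemma scalR_neg (M : Matrix (Fin 3) (Fin 3) ℝ) (h : M.PosDef) : scalR heis M < 0 := by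
  rw [scalR_eq _ (ne_of_gt h.det_pos)]
  have h22 := diag22_pos M h
  have hd := h.det_pos
  apply div_neg_of_neg_of_pos
  · nlinarith
  · linarith

theorem stmt12' (G : ℝ → Matrix (Fin 3) (Fin 3) ℝ)
    (hpd : ∀ t, 0 < t → (G t).PosDef)
    (hflow : ∀ t, 0 < t → ∀ i j : Fin 3,
      HasDerivAt (fun u => G u i j) (-2 * Ricm heis (G t) i j) t)
    (t : ℝ) (ht : 0 < t) :
    HasDerivAt (fun u => scalR heis (G u)) (6 * (scalR heis (G t))^2) t ∧
    HasDerivAt (fun u => u * scalR heis (G u))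
      (6 * t * scalR heis (G t) * (scalR heis (G t) + 1/(6*t))) t ∧
    6 * t * scalR heis (G t) * (scalR heis (G t) + 1/(6*t)) ≤ 0 := by
  have hder : ∀ s, 0 < s → HasDerivAt (fun u => scalR heis (G u))
      (6 * (scalR heis (G s))^2) s := fun s hs => hasDeriv_scalR G hpd hflow s hs
  have hneg : ∀ s, 0 < s → scalR heis (G s) < 0 := fun s hs => scalR_neg _ (hpd s hs)
  set Rf : ℝ → ℝ := fun u => scalR heis (G u) with hRf
  set h : ℝ → ℝ := fun u => -(6 * Rf u)⁻¹ with hh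
  have hhpos : ∀ s, 0 < s → 0 < h s := by
    intro s hs
    have := hneg s hs
    have h6 : 6 * Rf s < 0 := by simpa [hRf] using by linarith
    simp only [hh]
    exact neg_pos.mpr (inv_lt_zero.mpr h6)
  have hhder : ∀ s, 0 < s → HasDerivAt h 1 s := by
    intro s hs
    have hRs := hneg s hs
    have h6 : 6 * Rf s ≠ 0 := by
      intro hc; simp only [hRf] at hc ⊢; nlinarith [hneg s hs]
    have h1 := (((hder s hs).const_mul 6).inv h6).neg
    refine h1.congr_deriv ?_
    symm
    simp only [hRf]
    field_simp
    rw [div_self hRs.ne]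
  have key : ∀ s, 0 < s → s < t → h t - h s = t - s := by
    intro s hs hst
    obtain ⟨c, hc, hceq⟩ := exists_hasDerivAt_eq_slope h (fun _ => (1:ℝ)) hst
      (fun x hx => (hhder x (lt_of_lt_of_le hs hx.1)).continuousAt.continuousWithinAt)
      (fun x hx => hhder x (lt_trans hs hx.1))
    have h2 : (1:ℝ) = (h t - h s) / (t - s) := hceq
    rw [eq_div_iff (by linarith : t - s ≠ 0)] at h2
    linarith
  have hinv : h t = (-(6 * Rf t))⁻¹ := by simp only [hh]; exact inv_neg.symm
  clear_value h
  have hht : t ≤ h t := by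
    by_contra hcon
    push_neg at hcon
    have h0 : 0 < h t := hhpos t ht
    have hs : 0 < (t - h t)/2 := by linarith
    have hst : (t - h t)/2 < t := by linarith
    have hk := key _ hs hst
    have := hhpos _ hs
    linarith
  have hRt := hneg t ht
  have hy : (0:ℝ) < -(6 * Rf t) := by linarith
  have hht' : t ≤ (-(6 * Rf t))⁻¹ := hinv ▸ hht
  have h1 : t * (-(6 * Rf t)) ≤ 1 := by
    calc t * (-(6 * Rf t)) ≤ (-(6 * Rf t))⁻¹ * (-(6 * Rf t)) :=
          mul_le_mul_of_nonneg_right hht' hy.le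
      _ = 1 := inv_mul_cancel₀ (ne_of_gt hy)
  have h6t : (0:ℝ) < 6 * t := by linarith
  have hnn : 0 ≤ Rf t + 1/(6*t) := by
    have h2 : 0 ≤ 6 * t * Rf t + 1 := by nlinarith
    have h3 : Rf t + 1/(6*t) = (6*t*Rf t + 1)/(6*t) := by field_simp
    rw [h3]
    exact div_nonneg h2 h6t.le
  refine ⟨hder t ht, ?_, ?_⟩
  · have h2 := (hasDerivAt_id t).mul (hder t ht)
    refine h2.congr_deriv ?_
    symm
    simp only [hRf, id]
    field_simp
    ring
  · have hRtle : 6 * t * Rf t ≤ 0 := by nlinarith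
    exact mul_nonpos_of_nonpos_of_nonneg hRtle hnn

theorem stmt12 (G : ℝ → Matrix (Fin 3) (Fin 3) ℝ)
    (hpd : ∀ t, 0 < t → (G t).PosDef)
    (hflow : ∀ t, 0 < t → ∀ i j : Fin 3,
      HasDerivAt (fun u => G u i j) (-2 * Ricm heis (G t) i j) t)
    (t : ℝ) (ht : 0 < t) :
    HasDerivAt (fun u => scalR heis (G u)) (6 * (scalR heis (G t))^2) t ∧
    HasDerivAt (fun u => u * scalR heis (G u))
      (6 * t * scalR heis (G t) * (scalR heis (G t) + 1/(6*t))) t ∧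
    6 * t * scalR heis (G t) * (scalR heis (G t) + 1/(6*t)) ≤ 0 := by
  exact stmt12' G hpd hflow t ht
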